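/- Suppose p, q are nonzero coprime integers with 7q² + 59p² = 3^ω for some ω > 0 and pq ≡ −1 (mod 3). Let x' = |A(−p,q)| and y' = |B(−p,q)|. Then x' and y' are coprime positive integers satisfying 7x'² + 59y'² = 3^(2ω+5), and 3 does not divide x'. -/

import Mathlib

def A (p q : ℤ) : ℤ := 59*p^2 - 236*p*q - 7*q^2
def B (p q : ℤ) : ℤ := -118*p^2 - 14*p*q + 14*q^2

theorem stmt6 (p q : ℤ) (hp : p ≠ 0) (hq : q ≠ 0) (hcop : Int.gcd p q = 1)
    (ω : ℕ) (hω : 0 < ω) (h : 7*q^2 + 59*p^2 = 3^ω)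
    (hmod : p * q ≡ -1 [ZMOD 3])
    (x' y' : ℤ) (hx : x' = |A (-p) q|) (hy : y' = |B (-p) q|) :
    0 < x' ∧ 0 < y' ∧ Int.gcd x' y' = 1 ∧ 7*x'^2 + 59*y'^2 = 3^(2*ω + 5)
      ∧ ¬ (3 : ℤ) ∣ x' := by
  have key : ∀ P Q : ZMod 3, P * Q = -1 →
      (59*P^2 + 236*P*Q - 7*Q^2 = 2 ∧ -118*P^2 + 14*P*Q + 14*Q^2 = 2) := by decide
  have hmod' : ((p : ZMod 3)) * ((q : ZMod 3)) = -1 := by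
    have h2 : ((p * q : ℤ) : ZMod 3) = ((-1 : ℤ) : ZMod 3) := (ZMod.intCast_eq_intCast_iff' _ _ _).mpr hmod
    push_cast at h2
    exact h2
  obtain ⟨hA3, hB3⟩ := key _ _ hmod'
  have hAcast : ((A (-p) q : ℤ) : ZMod 3) = 2 := by
    rw [A]; push_cast; linear_combination hA3
  have hBcast : ((B (-p) q : ℤ) : ZMod 3) = 2 := by
    rw [B]; push_cast; linear_combination hB3
  have hAnd : ¬ (3 : ℤ) ∣ A (-p) q := by
    intro hd
    have := (ZMod.intCast_zmod_eq_zero_iff_dvd (A (-p) q) 3).2 (by exact_mod_cast hd)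
    rw [hAcast] at this
    exact (by decide : (2 : ZMod 3) ≠ 0) this
  have hAne : A (-p) q ≠ 0 := fun h0 => hAnd (h0 ▸ dvd_zero 3)
  have hBne : B (-p) q ≠ 0 := by
    intro h0
    rw [h0] at hBcast
    exact (by decide : (2 : ZMod 3) ≠ 0) (by simpa using hBcast.symm)
  have hx0 : 0 < x' := hx ▸ abs_pos.2 hAne
  have hy0 : 0 < y' := hy ▸ abs_pos.2 hBne
  have hnd : ¬ (3 : ℤ) ∣ x' := by
    rw [hx]
    intro hd
    exact hAnd ((abs_dvd _ _).1 ((dvd_abs 3 _).1 (by simpa using hd)))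
  have heq : 7*x'^2 + 59*y'^2 = 3^(2*ω + 5) := by
    rw [hx, hy, sq_abs, sq_abs, A, B]
    have : (3:ℤ)^(2*ω+5) = 243 * (3^ω)^2 := by ring
    rw [this, ← h]; ring
  refine ⟨hx0, hy0, ?_, heq, hnd⟩
  set g := Int.gcd x' y' with hg
  have hgx : (g : ℤ) ∣ x' := Int.gcd_dvd_left x' y'
  have hgy : (g : ℤ) ∣ y' := Int.gcd_dvd_right x' y'
  have hgpow : (g : ℤ) ∣ 3 ^ (2*ω + 5) := by
    rw [← heq]
    exact dvd_add (Dvd.dvd.mul_left (hgx.mul_right x' |>.trans (by rw [sq])) 7)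
      (Dvd.dvd.mul_left (hgy.mul_right y' |>.trans (by rw [sq])) 59)
  have hgpow' : g ∣ 3 ^ (2*ω + 5) := by
    have := Int.natAbs_dvd_natAbs.2 hgpow
    simpa [Int.natAbs_pow] using this
  have h3g : ¬ (3 ∣ g) := by
    intro hd
    exact hnd (dvd_trans (by exact_mod_cast hd) hgx)
  have hcop3 : Nat.Coprime g 3 :=
    ((Nat.Prime.coprime_iff_not_dvd Nat.prime_three).2 h3g).symm
  exact Nat.Coprime.eq_one_of_dvd (hcop3.pow_right _) hgpow'
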